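/- Let n ≥ 1, let α₁,…,αₙ < 0, and for κ > 0 and a symmetric matrix of nonnegative distances ℓ_{ij} define the real symmetric matrix Γ(κ) by Γ(κ)_{ij} = −δ_{ij} αᵢ⁻¹ − (1/(2κ)) e^{−κ ℓ_{ij}}. If ℓ and ℓ̃ are two such distance matrices with ℓ_{ij} ≤ ℓ̃_{ij} for all i,j and ℓ_{ij} < ℓ̃_{ij} for at least one pair i ≠ j, then for every κ > 0 the smallest eigenvalue of Γ(κ) (with distances ℓ) is strictly smaller than the smallest eigenvalue of Γ̃(κ) (with distances ℓ̃). -/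

import Mathlib

open Matrix Finset

private lemma quad_eq {n : ℕ} (A : Matrix (Fin n) (Fin n) ℝ) (c : Fin n → ℝ) :
    c ⬝ᵥ A *ᵥ c = ∑ i, ∑ j, c i * (A i j * c j) := by
  simp [dotProduct, mulVec, Finset.mul_sum]

private lemma exists_pos_min (n : ℕ) (hn : 1 ≤ n) (A : Matrix (Fin n) (Fin n) ℝ)
    (hsym : ∀ i j, A i j = A j i) (hneg : ∀ i j, i ≠ j → A i j < 0) :
    ∃ b : Fin n → ℝ, (∀ i, 0 < b i) ∧ (∑ i, (b i) ^ 2) = 1 ∧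
      IsLeast {r : ℝ | ∃ c : Fin n → ℝ, (∑ i, (c i) ^ 2) = 1 ∧ r = c ⬝ᵥ A *ᵥ c}
        (b ⬝ᵥ A *ᵥ b) := by
  set K : Set (Fin n → ℝ) := {c | (∑ i, (c i) ^ 2) = 1} with hK
  have hKc : IsCompact K := by
    apply Metric.isCompact_of_isClosed_isBounded
    · have : Continuous fun c : Fin n → ℝ => ∑ i, (c i) ^ 2 :=
        continuous_finset_sum _ fun i _ => (continuous_apply i).pow 2
      exact isClosed_eq this continuous_const
    · apply (Metric.isBounded_iff_subset_closedBall 0).mpr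
      refine ⟨1, fun c hc => ?_⟩
      simp only [Metric.mem_closedBall, dist_zero_right]
      rw [pi_norm_le_iff_of_nonneg zero_le_one]
      intro i
      rw [Real.norm_eq_abs, abs_le_one_iff_mul_self_le_one, ← sq]
      calc (c i) ^ 2 ≤ ∑ j, (c j) ^ 2 :=
            Finset.single_le_sum (f := fun j => (c j)^2) (fun j _ => sq_nonneg _) (mem_univ i)
        _ = 1 := hc
  have hKne : K.Nonempty := by
    refine ⟨Pi.single ⟨0, hn⟩ 1, ?_⟩
    simp [hK, Pi.single_apply]
  have hQcont : Continuous fun c : Fin n → ℝ => c ⬝ᵥ A *ᵥ c := by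
    have : (fun c : Fin n → ℝ => c ⬝ᵥ A *ᵥ c)
        = fun c => ∑ i, ∑ j, c i * (A i j * c j) := funext fun c => quad_eq A c
    rw [this]
    exact continuous_finset_sum _ fun i _ => continuous_finset_sum _ fun j _ =>
      (continuous_apply i).mul (continuous_const.mul (continuous_apply j))
  obtain ⟨c, hcK, hcmin⟩ := hKc.exists_isMinOn hKne hQcont.continuousOn
  -- pass to absolute values
  set b : Fin n → ℝ := fun i => |c i| with hb
  have hbK : b ∈ K := by
    simp only [hK, Set.mem_setOf_eq, hb, sq_abs]
    exact hcK
  have hble : b ⬝ᵥ A *ᵥ b ≤ c ⬝ᵥ A *ᵥ c := by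
    rw [quad_eq, quad_eq]
    refine Finset.sum_le_sum fun i _ => Finset.sum_le_sum fun j _ => ?_
    rcases eq_or_ne i j with rfl | hij
    · simp [hb, abs_mul_abs_self, mul_comm, mul_left_comm]
    · calc b i * (A i j * b j) = A i j * (b i * b j) := by ring
        _ = A i j * |c i * c j| := by rw [hb, abs_mul]
        _ ≤ A i j * (c i * c j) :=
            mul_le_mul_of_nonpos_left (le_abs_self _) (hneg i j hij).le
        _ = c i * (A i j * c j) := by ring
  have hbmin : ∀ d ∈ K, b ⬝ᵥ A *ᵥ b ≤ d ⬝ᵥ A *ᵥ d := fun d hd =>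
    le_trans hble (hcmin hd)
  have hbnonneg : ∀ i, 0 ≤ b i := fun i => abs_nonneg _
  -- positivity
  have hbpos : ∀ k, 0 < b k := by
    intro k
    rcases (hbnonneg k).lt_or_eq with h | h
    · exact h
    exfalso
    have hbk : b k = 0 := h.symm
    -- some other coordinate is positive
    have : ∃ j, 0 < b j ∧ j ≠ k := by
      by_contra hcon
      push_neg at hcon
      have hall : ∀ j, b j = 0 := by
        intro j
        rcases eq_or_ne j k with rfl | hj
        · exact hbk
        · rcases (hbnonneg j).lt_or_eq with h' | h'
          · exact absurd (hcon j h') hj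
          · exact h'.symm
      have : (∑ i, (b i) ^ 2) = 0 := by simp [hall]
      rw [hbK] at this; norm_num at this
    obtain ⟨j, hjpos, hjk⟩ := this
    set s : ℝ := ∑ j', A k j' * b j' with hs
    have hsneg : s < 0 := by
      have h0 : (0:ℝ) = ∑ _j' : Fin n, (0:ℝ) := by simp
      rw [hs, h0]
      refine Finset.sum_lt_sum (fun j' _ => ?_) ⟨j, mem_univ j, ?_⟩
      · rcases eq_or_ne j' k with rfl | h'
        · simp [hbk]
        · exact mul_nonpos_of_nonpos_of_nonneg (hneg k j' (Ne.symm h')).le (hbnonneg j')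
      · exact mul_neg_of_neg_of_pos (hneg k j (Ne.symm hjk)) hjpos
    set Qb : ℝ := b ⬝ᵥ A *ᵥ b with hQb
    set M : ℝ := |A k k| + |Qb| with hM
    have hM0 : (0:ℝ) ≤ M := by positivity
    set ε : ℝ := min 1 ((-s) / (M + 1)) with hε
    have hε0 : 0 < ε := lt_min one_pos (div_pos (by linarith) (by linarith))
    have hεle : ε ≤ (-s) / (M + 1) := min_le_right _ _
    have hkey : 2 * s + ε * (A k k - Qb) < 0 := by
      have h1 : ε * (A k k - Qb) ≤ ε * M := by
        refine mul_le_mul_of_nonneg_left ?_ hε0.le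
        have h1a := le_abs_self (A k k)
        have h1b := neg_abs_le Qb
        rw [hM]; linarith
      have h2 : ε * M ≤ -s := by
        calc ε * M ≤ ((-s) / (M + 1)) * M := mul_le_mul_of_nonneg_right hεle hM0
          _ ≤ -s := by
            rw [div_mul_eq_mul_div, div_le_iff₀ (by linarith)]
            nlinarith
      linarith
    set e : Fin n → ℝ := Pi.single k 1 with he
    set d : Fin n → ℝ := b + ε • e with hd
    have hbK1 : (∑ i, (b i) ^ 2) = 1 := hbK
    have hdsq : (∑ i, (d i) ^ 2) = 1 + ε ^ 2 := by
      have heach : ∀ i, (d i) ^ 2 = (b i) ^ 2 + (if i = k then 2 * ε * b i + ε ^ 2 else 0) := by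
        intro i
        rcases eq_or_ne i k with rfl | h
        · simp [hd, he, hbk, Pi.single_apply]
        · simp [hd, he, Pi.single_apply, h]
      rw [Finset.sum_congr rfl fun i _ => heach i, Finset.sum_add_distrib,
        Finset.sum_ite_eq' univ k, hbK1]
      simp [hbk]
    have hAe : A *ᵥ e = fun i => A i k := by
      rw [he, Matrix.mulVec_single]; simp; rfl
    have h1 : e ⬝ᵥ A *ᵥ b = s := by
      rw [he, single_dotProduct]
      simp [Matrix.mulVec, dotProduct, hs]
    have h2 : b ⬝ᵥ A *ᵥ e = s := by
      rw [hAe, hs]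
      simp only [dotProduct]
      exact Finset.sum_congr rfl fun i _ => by rw [hsym k i]; ring
    have h3 : e ⬝ᵥ A *ᵥ e = A k k := by
      rw [hAe, he, single_dotProduct]; simp
    have hQd : d ⬝ᵥ A *ᵥ d = Qb + 2 * ε * s + ε ^ 2 * A k k := by
      simp only [hd, Matrix.mulVec_add, Matrix.mulVec_smul, dotProduct_add,
        add_dotProduct, dotProduct_smul, smul_dotProduct, smul_eq_mul, h1, h2, h3, ← hQb]
      ring
    have h1ε : (0:ℝ) < 1 + ε ^ 2 := by positivity
    set t : ℝ := (Real.sqrt (1 + ε ^ 2))⁻¹ with ht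
    have ht2 : t ^ 2 * (1 + ε ^ 2) = 1 := by
      rw [ht, inv_pow, Real.sq_sqrt h1ε.le, inv_mul_cancel₀ h1ε.ne']
    have husq : (∑ i, ((t • d) i) ^ 2) = 1 := by
      simp only [Pi.smul_apply, smul_eq_mul, mul_pow, ← Finset.mul_sum]
      rw [hdsq, ht2]
    have hQu : (t • d) ⬝ᵥ A *ᵥ (t • d) = t ^ 2 * (d ⬝ᵥ A *ᵥ d) := by
      rw [Matrix.mulVec_smul, dotProduct_smul, smul_dotProduct]
      simp only [smul_eq_mul]; ring
    have hge : Qb ≤ (t • d) ⬝ᵥ A *ᵥ (t • d) := hbmin _ husq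
    rw [hQu, hQd] at hge
    have hX : Qb * (1 + ε ^ 2) ≤ Qb + 2 * ε * s + ε ^ 2 * A k k := by
      calc Qb * (1 + ε ^ 2)
          ≤ (t ^ 2 * (Qb + 2 * ε * s + ε ^ 2 * A k k)) * (1 + ε ^ 2) :=
            mul_le_mul_of_nonneg_right hge h1ε.le
        _ = (Qb + 2 * ε * s + ε ^ 2 * A k k) * (t ^ 2 * (1 + ε ^ 2)) := by ring
        _ = Qb + 2 * ε * s + ε ^ 2 * A k k := by rw [ht2, mul_one]
    nlinarith [mul_neg_of_pos_of_neg hε0 hkey]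
  exact ⟨b, hbpos, hbK, ⟨b, hbK, rfl⟩, fun r hr => by
    obtain ⟨c', hc', rfl⟩ := hr
    exact hbmin c' hc'⟩


/-- Strict monotonicity of the smallest eigenvalue of the Krein matrix
`Γ(κ)_{ij} = -δ_{ij} αᵢ⁻¹ - (1/(2κ)) e^{-κ ℓ_{ij}}` in the distances: if `ℓ ≤ ℓ̃`
entrywise with strict inequality at some off-diagonal pair, then for every `κ > 0`
the smallest eigenvalue (minimum of the quadratic form over unit vectors) strictly
increases. -/
theorem krein_matrix_min_eigenvalue_strict_mono (n : ℕ) (hn : 1 ≤ n)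
    (α : Fin n → ℝ) (hα : ∀ i, α i < 0)
    (ℓ ℓt : Fin n → Fin n → ℝ)
    (hℓ0 : ∀ i j, 0 ≤ ℓ i j) (hℓsym : ∀ i j, ℓ i j = ℓ j i)
    (hℓt0 : ∀ i j, 0 ≤ ℓt i j) (hℓtsym : ∀ i j, ℓt i j = ℓt j i)
    (hle : ∀ i j, ℓ i j ≤ ℓt i j)
    (hlt : ∃ i j, i ≠ j ∧ ℓ i j < ℓt i j)
    (κ : ℝ) (hκ : 0 < κ) :
    sInf {r : ℝ | ∃ c : Fin n → ℝ, (∑ i, (c i) ^ 2) = 1 ∧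
        r = ∑ i, ∑ j, c i *
          ((-(if i = j then (α i)⁻¹ else 0) - (1 / (2 * κ)) * Real.exp (-κ * ℓ i j)) * c j)} <
    sInf {r : ℝ | ∃ c : Fin n → ℝ, (∑ i, (c i) ^ 2) = 1 ∧
        r = ∑ i, ∑ j, c i *
          ((-(if i = j then (α i)⁻¹ else 0) - (1 / (2 * κ)) * Real.exp (-κ * ℓt i j)) * c j)} := by
  set A : Matrix (Fin n) (Fin n) ℝ := fun i j =>
    -(if i = j then (α i)⁻¹ else 0) - (1 / (2 * κ)) * Real.exp (-κ * ℓ i j) with hA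
  set At : Matrix (Fin n) (Fin n) ℝ := fun i j =>
    -(if i = j then (α i)⁻¹ else 0) - (1 / (2 * κ)) * Real.exp (-κ * ℓt i j) with hAt
  have hc2 : (0:ℝ) < 1 / (2 * κ) := by positivity
  have hAsym : ∀ i j, A i j = A j i := by
    intro i j
    by_cases h : i = j
    · subst h; rfl
    · simp [hA, h, Ne.symm h, hℓsym i j]
  have hAtsym : ∀ i j, At i j = At j i := by
    intro i j
    by_cases h : i = j
    · subst h; rfl
    · simp [hAt, h, Ne.symm h, hℓtsym i j]
  have hAneg : ∀ i j, i ≠ j → A i j < 0 := by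
    intro i j h
    have h1 : 0 < (1 / (2 * κ)) * Real.exp (-κ * ℓ i j) :=
      mul_pos hc2 (Real.exp_pos _)
    simp only [hA, if_neg h, neg_zero, zero_sub]
    linarith
  have hAtneg : ∀ i j, i ≠ j → At i j < 0 := by
    intro i j h
    have h1 : 0 < (1 / (2 * κ)) * Real.exp (-κ * ℓt i j) :=
      mul_pos hc2 (Real.exp_pos _)
    simp only [hAt, if_neg h, neg_zero, zero_sub]
    linarith
  have hAle : ∀ i j, A i j ≤ At i j := by
    intro i j
    have h1 : Real.exp (-κ * ℓt i j) ≤ Real.exp (-κ * ℓ i j) :=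
      Real.exp_le_exp.mpr (by nlinarith [hle i j])
    simp only [hA, hAt]
    nlinarith
  obtain ⟨i0, j0, hij0, hlt0⟩ := hlt
  have hAlt : A i0 j0 < At i0 j0 := by
    have h1 : Real.exp (-κ * ℓt i0 j0) < Real.exp (-κ * ℓ i0 j0) :=
      Real.exp_lt_exp.mpr (by nlinarith)
    simp only [hA, hAt]
    nlinarith
  obtain ⟨b, hbpos, hbsq, hleast_t⟩ := exists_pos_min n hn At hAtsym hAtneg
  obtain ⟨b', _, _, hleast⟩ := exists_pos_min n hn A hAsym hAneg
  have e1 : {r : ℝ | ∃ c : Fin n → ℝ, (∑ i, (c i) ^ 2) = 1 ∧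
        r = ∑ i, ∑ j, c i *
          ((-(if i = j then (α i)⁻¹ else 0) - (1 / (2 * κ)) * Real.exp (-κ * ℓ i j)) * c j)}
      = {r : ℝ | ∃ c : Fin n → ℝ, (∑ i, (c i) ^ 2) = 1 ∧ r = c ⬝ᵥ A *ᵥ c} := by
    ext r
    constructor
    · rintro ⟨c, h1, rfl⟩; exact ⟨c, h1, (quad_eq A c).symm⟩
    · rintro ⟨c, h1, rfl⟩; exact ⟨c, h1, quad_eq A c⟩
  have e2 : {r : ℝ | ∃ c : Fin n → ℝ, (∑ i, (c i) ^ 2) = 1 ∧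
        r = ∑ i, ∑ j, c i *
          ((-(if i = j then (α i)⁻¹ else 0) - (1 / (2 * κ)) * Real.exp (-κ * ℓt i j)) * c j)}
      = {r : ℝ | ∃ c : Fin n → ℝ, (∑ i, (c i) ^ 2) = 1 ∧ r = c ⬝ᵥ At *ᵥ c} := by
    ext r
    constructor
    · rintro ⟨c, h1, rfl⟩; exact ⟨c, h1, (quad_eq At c).symm⟩
    · rintro ⟨c, h1, rfl⟩; exact ⟨c, h1, quad_eq At c⟩
  rw [e1, e2, hleast_t.csInf_eq]
  have hstep : b ⬝ᵥ A *ᵥ b < b ⬝ᵥ At *ᵥ b := by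
    rw [quad_eq, quad_eq]
    refine Finset.sum_lt_sum (fun i _ => Finset.sum_le_sum fun j _ =>
        mul_le_mul_of_nonneg_left
          (mul_le_mul_of_nonneg_right (hAle i j) (hbpos j).le) (hbpos i).le)
      ⟨i0, mem_univ i0, Finset.sum_lt_sum (fun j _ =>
        mul_le_mul_of_nonneg_left
          (mul_le_mul_of_nonneg_right (hAle i0 j) (hbpos j).le) (hbpos i0).le)
      ⟨j0, mem_univ j0, ?_⟩⟩
    exact mul_lt_mul_of_pos_left
      (mul_lt_mul_of_pos_right hAlt (hbpos j0)) (hbpos i0)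
  calc sInf {r : ℝ | ∃ c : Fin n → ℝ, (∑ i, (c i) ^ 2) = 1 ∧ r = c ⬝ᵥ A *ᵥ c}
      ≤ b ⬝ᵥ A *ᵥ b := csInf_le ⟨_, hleast.2⟩ ⟨b, hbsq, rfl⟩
    _ < b ⬝ᵥ At *ᵥ b := hstep
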